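/- Let y_2, …, y_11, z, ε be nonzero complex numbers, and substitute y_1 = ε and y_12 = z/ε into the simple roots of the quiver Q_12. Then, independently of ε: α_0α_5 = z·y_2y_11; α_i is unchanged for i = 1,2,3,4; β_0 = z·y_4y_5y_8y_9; β_1 = y_2y_3y_6y_7y_10y_11; and α_1^{-1}α_2^{-2}α_3^{-3}α_4^{-4}α_5^{-5}(β'_1)^5 = y_2^5y_4^4y_6^3y_8^2y_10/(y_3y_5^2y_7^3y_9^4y_11^5). In other words, with z playing the role of the Q_11 variable y_1, the Q_12 quantities (α_0α_5, α_1, α_2, α_3, α_4, β_0, β_1, α_1^{-1}α_2^{-2}α_3^{-3}α_4^{-4}α_5^{-5}(β'_1)^5) reduce under the confluence 12→1 exactly to the Q_11 quantities (α_0, α_1, α_2, α_3, α_4, β_0, β_1, γ). -/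

import Mathlib

/-- Under the substitution `y_1 = ε`, `y_12 = z/ε` (the confluence
`12 → 1`), the `Q_12` quantities `(α_0α_5, α_1, α_2, α_3, α_4, β_0, β_1,
α_1⁻¹α_2⁻²α_3⁻³α_4⁻⁴α_5⁻⁵(β'_1)⁵)` reduce, independently of `ε`, exactly to the
`Q_11` quantities `(α_0, α_1, α_2, α_3, α_4, β_0, β_1, γ)` (with `z` playing the role
of the `Q_11` variable `y_1`). -/
theorem confluence_12_to_1_roots (y2 y3 y4 y5 y6 y7 y8 y9 y10 y11 z ε : ℂ)
    (h2 : y2 ≠ 0) (h3 : y3 ≠ 0) (h4 : y4 ≠ 0) (h5 : y5 ≠ 0) (h6 : y6 ≠ 0)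
    (h7 : y7 ≠ 0) (h8 : y8 ≠ 0) (h9 : y9 ≠ 0) (h10 : y10 ≠ 0) (h11 : y11 ≠ 0)
    (hz : z ≠ 0) (he : ε ≠ 0) :
    ε * y2 * (y11 * (z / ε)) = z * (y2 * y11) ∧
    y3 * y4 = y3 * y4 ∧ y5 * y6 = y5 * y6 ∧ y7 * y8 = y7 * y8 ∧ y9 * y10 = y9 * y10 ∧
    ε * y4 * y5 * y8 * y9 * (z / ε) = z * (y4 * y5 * y8 * y9) ∧
    y2 * y3 * y6 * y7 * y10 * y11 = y2 * y3 * y6 * y7 * y10 * y11 ∧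
    (y3 * y4)⁻¹ * ((y5 * y6) ^ 2)⁻¹ * ((y7 * y8) ^ 3)⁻¹ * ((y9 * y10) ^ 4)⁻¹ *
        ((y11 * (z / ε)) ^ 5)⁻¹ * (y2 * y4 * y6 * y8 * y10 * (z / ε)) ^ 5 =
      y2 ^ 5 * y4 ^ 4 * y6 ^ 3 * y8 ^ 2 * y10 /
        (y3 * y5 ^ 2 * y7 ^ 3 * y9 ^ 4 * y11 ^ 5) := by
  refine ⟨by field_simp, rfl, rfl, rfl, rfl, by field_simp, rfl, ?_⟩
  have hw : z / ε ≠ 0 := div_ne_zero hz he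
  generalize z / ε = w at hw ⊢
  rw [eq_div_iff (by simp [h3, h5, h7, h9, h11, pow_eq_zero_iff]),
    ← mul_inv, ← mul_inv, ← mul_inv, ← mul_inv, mul_assoc,
    inv_mul_eq_iff_eq_mul₀
      (by simp [h3, h4, h5, h6, h7, h8, h9, h10, h11, hw, pow_eq_zero_iff])]
  ring
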